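/- Galois's theorem on purely periodic continued fractions: an irrational real number x has a purely periodic regular continued fraction expansion (i.e. there exists k ≥ 1 with aₙ₊ₖ = aₙ for all n ≥ 0) if and only if x is a reduced quadratic irrational, meaning x is a quadratic irrational with x > 1 whose Galois conjugate x′ (the other root of its minimal quadratic polynomial over ℚ) satisfies −1 < x′ < 0. -/

import Mathlib

/-- The Gauss map `T : [0,1) → [0,1)`, `T 0 = 0` and `T x = 1/x - ⌊1/x⌋` for `x ≠ 0`. -/
noncomputable def gaussMap : ℝ → ℝ := fun x => if x = 0 then 0 else Int.fract (1 / x)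

/-- The partial quotients of the regular continued fraction expansion
`x = [a₀; a₁, a₂, …]`: `a₀ = ⌊x⌋` and `aₙ₊₁ = ⌊1 / Tⁿ({x})⌋` where `T` is the Gauss map. -/
noncomputable def cfA (x : ℝ) : ℕ → ℤ
  | 0 => ⌊x⌋
  | n + 1 => ⌊1 / gaussMap^[n] (Int.fract x)⌋

noncomputable def xseq (x : ℝ) : ℕ → ℝ
  | 0 => x
  | n + 1 => 1 / Int.fract (xseq x n)

lemma irrational_fract {y : ℝ} (h : Irrational y) : Irrational (Int.fract y) := by
  rw [Int.fract]
  exact h.sub_intCast ⌊y⌋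

lemma fract_pos_of_irrational {y : ℝ} (h : Irrational y) : 0 < Int.fract y :=
  lt_of_le_of_ne (Int.fract_nonneg y) (Ne.symm (irrational_fract h).ne_zero)

lemma irrational_xseq {x : ℝ} (hx : Irrational x) : ∀ n, Irrational (xseq x n) := by
  intro n
  induction n with
  | zero => exact hx
  | succ n ih =>
      show Irrational (1 / Int.fract (xseq x n))
      simpa [one_div] using (irrational_fract ih).inv

lemma xseq_gt_one {x : ℝ} (hx : Irrational x) (n : ℕ) : 1 < xseq x (n + 1) := by
  have h1 := fract_pos_of_irrational (irrational_xseq hx n)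
  have h2 := Int.fract_lt_one (xseq x n)
  show 1 < 1 / Int.fract (xseq x n)
  rw [lt_div_iff₀ h1]; linarith

lemma inv_xseq_succ {x : ℝ} (hx : Irrational x) (n : ℕ) :
    1 / xseq x (n + 1) = Int.fract (xseq x n) := by
  have h1 := fract_pos_of_irrational (irrational_xseq hx n)
  show 1 / (1 / Int.fract (xseq x n)) = _
  field_simp

/-- `xₙ = ⌊xₙ⌋ + 1/xₙ₊₁`. -/
lemma xseq_eq_floor_add {x : ℝ} (hx : Irrational x) (n : ℕ) :
    xseq x n = (⌊xseq x n⌋ : ℝ) + 1 / xseq x (n + 1) := by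
  rw [inv_xseq_succ hx, Int.fract]; ring

lemma fract_xseq {x : ℝ} (hx : Irrational x) (n : ℕ) :
    gaussMap^[n] (Int.fract x) = Int.fract (xseq x n) := by
  induction n with
  | zero => rfl
  | succ n ih =>
      rw [Function.iterate_succ_apply', ih]
      have h1 := fract_pos_of_irrational (irrational_xseq hx n)
      show (if _ then _ else _) = _
      rw [if_neg h1.ne']
      rfl

lemma cfA_eq_floor_xseq {x : ℝ} (hx : Irrational x) (n : ℕ) :
    cfA x n = ⌊xseq x n⌋ := by
  cases n with
  | zero => rfl
  | succ n =>
      show ⌊1 / gaussMap^[n] (Int.fract x)⌋ = _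
      rw [fract_xseq hx n]
      rfl

lemma xseq_add {x : ℝ} (k n : ℕ) : xseq x (n + k) = xseq (xseq x k) n := by
  induction n with
  | zero => simp only [Nat.zero_add]; rfl
  | succ n ih =>
      have : n + 1 + k = (n + k) + 1 := by omega
      rw [this, show xseq x ((n+k)+1) = 1 / Int.fract (xseq x (n+k)) from rfl, ih]
      rfl

/-- One-step difference relation. -/
lemma diff_step {x y : ℝ} (hx : Irrational x) (hy : Irrational y) (n : ℕ)
    (hf : ⌊xseq x n⌋ = ⌊xseq y n⌋) :
    xseq x n - xseq y n = (xseq y (n+1) - xseq x (n+1)) / (xseq x (n+1) * xseq y (n+1)) := by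
  have hx1 : (0:ℝ) < xseq x (n+1) := lt_trans one_pos (xseq_gt_one hx n)
  have hy1 : (0:ℝ) < xseq y (n+1) := lt_trans one_pos (xseq_gt_one hy n)
  have e1 := inv_xseq_succ hx n
  have e2 := inv_xseq_succ hy n
  have : xseq x n - xseq y n = Int.fract (xseq x n) - Int.fract (xseq y n) := by
    rw [Int.fract, Int.fract, hf]; ring
  rw [this, ← e1, ← e2]
  field_simp

/-- Consecutive complete quotients have product > 2. -/
lemma prod_two {x : ℝ} (hx : Irrational x) (n : ℕ) :
    2 < xseq x (n+1) * xseq x (n+2) := by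
  have h1 : 1 < xseq x (n+1) := xseq_gt_one hx n
  have hffl : (1:ℤ) ≤ ⌊xseq x (n+1)⌋ := by
    exact Int.le_floor.mpr (by exact_mod_cast h1.le)
  have hfr := fract_pos_of_irrational (irrational_xseq hx (n+1))
  have hfl1 : Int.fract (xseq x (n+1)) < 1 := Int.fract_lt_one _
  have hxge : (1:ℝ) + Int.fract (xseq x (n+1)) ≤ xseq x (n+1) := by
    have h2 : Int.fract (xseq x (n+1)) = xseq x (n+1) - (⌊xseq x (n+1)⌋ : ℝ) := rfl
    have : (1:ℝ) ≤ (⌊xseq x (n+1)⌋ : ℝ) := by exact_mod_cast hffl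
    linarith
  have hx2 : xseq x (n+2) = 1 / Int.fract (xseq x (n+1)) := rfl
  rw [hx2]
  have key : (1 + Int.fract (xseq x (n+1))) * (1 / Int.fract (xseq x (n+1))) ≤
      xseq x (n+1) * (1 / Int.fract (xseq x (n+1))) := by
    apply mul_le_mul_of_nonneg_right hxge (by positivity)
  have : (1 + Int.fract (xseq x (n+1))) * (1 / Int.fract (xseq x (n+1)))
      = 1 / Int.fract (xseq x (n+1)) + 1 := by field_simp
  rw [this] at key
  have : 1 < 1 / Int.fract (xseq x (n+1)) := by
    rw [lt_div_iff₀ hfr]; linarith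
  linarith

/-- Two irrationals with the same partial quotient floors along the orbit are equal. -/
lemma key_eq {x y : ℝ} (hx : Irrational x) (hy : Irrational y)
    (h : ∀ n, ⌊xseq x n⌋ = ⌊xseq y n⌋) : x = y := by
  have main : ∀ m n, |xseq x n - xseq y n| ≤ (1/4 : ℝ) ^ m := by
    intro m
    induction m with
    | zero =>
        intro n
        have := diff_step hx hy n (h n)
        have h1 : |Int.fract (xseq x n) - Int.fract (xseq y n)| ≤ 1 := by
          have a1 := Int.fract_nonneg (xseq x n); have a2 := Int.fract_lt_one (xseq x n)
          have b1 := Int.fract_nonneg (xseq y n); have b2 := Int.fract_lt_one (xseq y n)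
          rw [abs_le]; constructor <;> linarith
        have : xseq x n - xseq y n = Int.fract (xseq x n) - Int.fract (xseq y n) := by
          rw [Int.fract, Int.fract, h n]; ring
        rw [this]; simpa using h1
    | succ m ih =>
        intro n
        have e1 := diff_step hx hy n (h n)
        have e2 : xseq x (n+1) - xseq y (n+1) =
            (xseq y (n+2) - xseq x (n+2)) / (xseq x (n+2) * xseq y (n+2)) :=
          diff_step hx hy (n+1) (h (n+1))
        have p1 := prod_two hx n
        have p2 := prod_two hy n
        have hx1 : (1:ℝ) < xseq x (n+1) := xseq_gt_one hx n
        have hy1 : (1:ℝ) < xseq y (n+1) := xseq_gt_one hy n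
        have hx2 : (1:ℝ) < xseq x (n+2) := xseq_gt_one hx (n+1)
        have hy2 : (1:ℝ) < xseq y (n+2) := xseq_gt_one hy (n+1)
        have e : xseq x n - xseq y n =
            (xseq x (n+2) - xseq y (n+2)) /
            ((xseq x (n+1) * xseq y (n+1)) * (xseq x (n+2) * xseq y (n+2))) := by
          have hne1 : xseq x (n+1) * xseq y (n+1) ≠ 0 := by positivity
          have hne2 : xseq x (n+2) * xseq y (n+2) ≠ 0 := by positivity
          rw [e1, show xseq y (n+1) - xseq x (n+1) = -(xseq x (n+1) - xseq y (n+1)) by ring,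
            e2]
          field_simp
          ring
        rw [e, abs_div]
        have hd : (2:ℝ) * 2 ≤ (xseq x (n+1) * xseq y (n+1)) * (xseq x (n+2) * xseq y (n+2)) := by
          nlinarith
        have hdpos : (0:ℝ) < (xseq x (n+1) * xseq y (n+1)) * (xseq x (n+2) * xseq y (n+2)) := by
          nlinarith
        have habs : |(xseq x (n+1) * xseq y (n+1)) * (xseq x (n+2) * xseq y (n+2))|
            = (xseq x (n+1) * xseq y (n+1)) * (xseq x (n+2) * xseq y (n+2)) := abs_of_pos hdpos
        rw [habs]
        have ihn := ih (n+2)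
        calc |xseq x (n+2) - xseq y (n+2)| / ((xseq x (n+1) * xseq y (n+1)) * (xseq x (n+2) * xseq y (n+2)))
            ≤ (1/4:ℝ)^m / 4 := by
              apply div_le_div₀ (by positivity) ihn (by norm_num) (by linarith)
          _ = (1/4:ℝ)^(m+1) := by ring
  by_contra hne
  have hpos : 0 < |x - y| := by
    rw [abs_pos]; exact sub_ne_zero.mpr hne
  obtain ⟨m, hm⟩ := exists_pow_lt_of_lt_one hpos (by norm_num : (1/4:ℝ) < 1)
  exact absurd (main m 0) (not_le.mpr hm)

/-- `xₙ xₙ₊₁ = ⌊xₙ⌋ xₙ₊₁ + 1`. -/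
lemma mulrel {x : ℝ} (hx : Irrational x) (n : ℕ) :
    xseq x n * xseq x (n+1) = (⌊xseq x n⌋ : ℝ) * xseq x (n+1) + 1 := by
  have h := xseq_eq_floor_add hx n
  have hne : xseq x (n+1) ≠ 0 := by
    have := xseq_gt_one hx n; linarith
  field_simp at h
  linear_combination h

/-- Numerators and denominators of the convergents. -/
noncomputable def pqc (x : ℝ) : ℕ → ℤ × ℤ
  | 0 => (1, 0)
  | 1 => (⌊x⌋, 1)
  | (n+2) => (⌊xseq x (n+1)⌋ * (pqc x (n+1)).1 + (pqc x n).1,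
              ⌊xseq x (n+1)⌋ * (pqc x (n+1)).2 + (pqc x n).2)

lemma pqc_rel {x : ℝ} (hx : Irrational x) : ∀ n : ℕ,
    x * (((pqc x (n+1)).2 : ℝ) * xseq x (n+1) + ((pqc x n).2 : ℝ))
      = ((pqc x (n+1)).1 : ℝ) * xseq x (n+1) + ((pqc x n).1 : ℝ) := by
  intro n
  induction n with
  | zero =>
      have h := mulrel hx 0
      simp only [pqc]
      push_cast
      have hx0 : xseq x 0 = x := rfl
      rw [hx0] at h
      linear_combination h
  | succ n ih =>
      have h : xseq x (n+1) * xseq x (n+2) = (⌊xseq x (n+1)⌋ : ℝ) * xseq x (n+2) + 1 :=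
        mulrel hx (n+1)
      simp only [pqc]
      push_cast
      push_cast at ih
      linear_combination xseq x (n+2) * ih - (x * ((pqc x (n+1)).2 : ℝ) - ((pqc x (n+1)).1 : ℝ)) * h

lemma pqc_pos {x : ℝ} (hx : Irrational x) (ha0 : 1 ≤ ⌊x⌋) : ∀ n : ℕ,
    1 ≤ (pqc x n).1 ∧ (pqc x n).1 ≤ (pqc x (n+1)).1 ∧
    0 ≤ (pqc x n).2 ∧ 1 ≤ (pqc x (n+1)).2 ∧ (pqc x n).2 ≤ (pqc x (n+1)).2 ∧
    (pqc x n).2 + (pqc x n).1 < (pqc x (n+1)).2 + (pqc x (n+1)).1 := by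
  intro n
  induction n with
  | zero =>
      simp [pqc]
      omega
  | succ n ih =>
      obtain ⟨h1, h2, h3, h4, h5, h6⟩ := ih
      have ha : 1 ≤ ⌊xseq x (n+1)⌋ := by
        have hgt : (1:ℝ) < xseq x (n+1) := xseq_gt_one hx n
        exact Int.le_floor.mpr (by exact_mod_cast hgt.le)
      have hp : (pqc x (n+1)).1 ≤ ⌊xseq x (n+1)⌋ * (pqc x (n+1)).1 :=
        le_mul_of_one_le_left (by omega) ha
      have hq : (pqc x (n+1)).2 ≤ ⌊xseq x (n+1)⌋ * (pqc x (n+1)).2 :=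
        le_mul_of_one_le_left (by omega) ha
      simp only [pqc]
      refine ⟨by linarith, by linarith, by linarith, by linarith, by linarith, by linarith⟩

lemma vieta_prod (A B C t : ℝ) (hA : A ≠ 0) (h : A*t^2 + B*t + C = 0) :
    A * (t * (-B/A - t)) = C := by
  field_simp
  linear_combination -h

lemma vieta_sum (A B t : ℝ) (hA : A ≠ 0) :
    A * (t + (-B/A - t)) = -B := by
  field_simp
  ring

/-- The forward direction: purely periodic implies reduced quadratic. -/
lemma forward_dir {x : ℝ} (hx : Irrational x) (k : ℕ) (hk1 : 1 ≤ k)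
    (hper : ∀ n : ℕ, cfA x (n + k) = cfA x n) :
    1 < x ∧ ∃ A B C : ℤ, A ≠ 0 ∧ (A : ℝ) * x ^ 2 + (B : ℝ) * x + (C : ℝ) = 0 ∧
        -1 < -(B : ℝ) / (A : ℝ) - x ∧ -(B : ℝ) / (A : ℝ) - x < 0 := by
  obtain ⟨j, rfl⟩ : ∃ j, k = j + 1 := ⟨k - 1, by omega⟩
  have hxk : x = xseq x (j+1) := by
    apply key_eq hx (irrational_xseq hx (j+1))
    intro n
    rw [← xseq_add]
    rw [← cfA_eq_floor_xseq hx n, ← cfA_eq_floor_xseq hx (n + (j+1))]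
    exact (hper n).symm
  have hx1 : 1 < x := by rw [hxk]; exact xseq_gt_one hx j
  have ha0 : 1 ≤ ⌊x⌋ := Int.le_floor.mpr (by exact_mod_cast hx1.le)
  obtain ⟨h1, h2, h3, h4, h5, h6⟩ := pqc_pos hx ha0 j
  refine ⟨hx1, (pqc x (j+1)).2, (pqc x j).2 - (pqc x (j+1)).1, -(pqc x j).1, by omega, ?_, ?_⟩
  · have h := pqc_rel hx j
    rw [← hxk] at h
    push_cast
    linear_combination h
  · push_cast
    have hA : (0:ℝ) < ((pqc x (j+1)).2 : ℝ) := by exact_mod_cast (by omega : (0:ℤ) < (pqc x (j+1)).2)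
    set A : ℝ := ((pqc x (j+1)).2 : ℝ) with hAdef
    set B : ℝ := ((pqc x j).2 : ℝ) - ((pqc x (j+1)).1 : ℝ) with hBdef
    set C : ℝ := -((pqc x j).1 : ℝ) with hCdef
    have heq : A * x ^ 2 + B * x + C = 0 := by
      have h := pqc_rel hx j
      rw [← hxk] at h
      rw [hAdef, hBdef, hCdef]
      linear_combination h
    have hAne : A ≠ 0 := ne_of_gt hA
    have hprod := vieta_prod A B C x hAne heq
    have hsum := vieta_sum A B x hAne
    set r : ℝ := -B/A - x with hr
    have hC : C < 0 := by
      have hc1 : (1:ℝ) ≤ ((pqc x j).1 : ℝ) := by exact_mod_cast h1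
      rw [hCdef]; linarith
    have hr0 : r < 0 := by
      by_contra hcon
      push_neg at hcon
      have hxr : 0 ≤ x * r := mul_nonneg (by linarith) hcon
      have := mul_nonneg hA.le hxr
      linarith
    have hABC : (0:ℝ) < A - B + C := by
      have hcast : ((pqc x j).2 : ℝ) + ((pqc x j).1 : ℝ) + 1 ≤ ((pqc x (j+1)).2 : ℝ) + ((pqc x (j+1)).1 : ℝ) := by
        exact_mod_cast (by omega : (pqc x j).2 + (pqc x j).1 + 1 ≤ (pqc x (j+1)).2 + (pqc x (j+1)).1)
      rw [hAdef, hBdef, hCdef]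
      linarith
    have hfact : A * (1 + x) * (1 + r) = A - B + C := by
      have hexp : A * (1 + x) * (1 + r) = A + A * (x + r) + A * (x * r) := by ring
      rw [hexp, hsum, hprod]; ring
    have hrm1 : -1 < r := by
      by_contra hcon
      push_neg at hcon
      have h1x : (0:ℝ) < A * (1 + x) := by nlinarith
      have : A * (1 + x) * (1 + r) ≤ 0 :=
        mul_nonpos_of_nonneg_of_nonpos h1x.le (by linarith)
      linarith
    exact ⟨hrm1, hr0⟩

lemma conj_root (A B C t : ℝ) (hA : A ≠ 0) (h : A*t^2 + B*t + C = 0) :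
    A*(-B/A - t)^2 + B*(-B/A - t) + C = 0 := by
  field_simp
  linear_combination A * h

/-- Key algebraic/order step for the reduced quadratic orbit. -/
lemma red_step (A B C a : ℤ) (X X' Y : ℝ)
    (hA : 0 < A) (heq : (A:ℝ)*X^2 + (B:ℝ)*X + (C:ℝ) = 0)
    (hY : Y = -(B:ℝ)/(A:ℝ) - X)
    (hX1 : 1 < X) (hYm : -1 < Y) (hY0 : Y < 0)
    (ha : 1 ≤ a) (hXa : 0 < X - (a:ℝ))
    (hX' : X' = 1/(X - (a:ℝ))) (hX'1 : 1 < X') :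
    0 < -(A*a^2 + B*a + C) ∧
    ((-(A*a^2 + B*a + C) : ℤ):ℝ)*X'^2 + ((-(2*A*a + B) : ℤ):ℝ)*X' + ((-A : ℤ):ℝ) = 0 ∧
    (-(((-(2*A*a+B):ℤ)):ℝ)/(((-(A*a^2+B*a+C):ℤ)):ℝ) - X') = 1/(Y - (a:ℝ)) ∧
    -1 < 1/(Y - (a:ℝ)) ∧ 1/(Y - (a:ℝ)) < 0 := by
  have hAR : (0:ℝ) < (A:ℝ) := by exact_mod_cast hA
  have hARne : (A:ℝ) ≠ 0 := ne_of_gt hAR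
  have haR : (1:ℝ) ≤ (a:ℝ) := by exact_mod_cast ha
  have hXane : X - (a:ℝ) ≠ 0 := ne_of_gt hXa
  have hYa : Y - (a:ℝ) < -1 := by linarith
  have hYane : Y - (a:ℝ) ≠ 0 := by linarith
  set yt : ℝ := 1/(Y - (a:ℝ)) with hyt
  have hyt0 : yt < 0 := by
    rw [hyt]
    exact one_div_neg.mpr (by linarith)
  have hytk : (Y - (a:ℝ)) * yt = 1 := by rw [hyt]; field_simp
  have hytm1 : -1 < yt := by
    by_contra hcon
    push_neg at hcon
    nlinarith [hytk, mul_nonneg (by linarith : (0:ℝ) ≤ -yt - 1) (by linarith : (0:ℝ) ≤ -(Y - (a:ℝ)) - 1)]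
  -- new leading coefficient, real form
  have key1 : (-((A:ℝ)*(a:ℝ)^2 + (B:ℝ)*(a:ℝ) + (C:ℝ))) = (A:ℝ)*(X - (a:ℝ))*((a:ℝ) - Y) := by
    rw [hY]
    field_simp
    linear_combination -heq
  have hA'R : (0:ℝ) < -((A:ℝ)*(a:ℝ)^2 + (B:ℝ)*(a:ℝ) + (C:ℝ)) := by
    rw [key1]
    have : (0:ℝ) < (a:ℝ) - Y := by linarith
    positivity
  have hA'int : 0 < -(A*a^2 + B*a + C) := by exact_mod_cast (by push_cast; linarith : (0:ℝ) < (-(A*a^2 + B*a + C) : ℤ))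
  have hA'Rne : ((-(A*a^2 + B*a + C) : ℤ):ℝ) ≠ 0 := by
    have : (0:ℝ) < ((-(A*a^2 + B*a + C) : ℤ):ℝ) := by exact_mod_cast hA'int
    linarith
  -- new equation at X'
  have heq' : ((-(A*a^2 + B*a + C) : ℤ):ℝ)*X'^2 + ((-(2*A*a + B) : ℤ):ℝ)*X' + ((-A : ℤ):ℝ) = 0 := by
    rw [hX']
    push_cast
    field_simp
    linear_combination -heq
  -- Y is a root of old equation
  have hYeq : (A:ℝ)*Y^2 + (B:ℝ)*Y + (C:ℝ) = 0 := by
    rw [hY]; exact conj_root _ _ _ _ hARne heq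
  -- yt is a root of new equation
  have hyteq : ((-(A*a^2 + B*a + C) : ℤ):ℝ)*yt^2 + ((-(2*A*a + B) : ℤ):ℝ)*yt + ((-A : ℤ):ℝ) = 0 := by
    rw [hyt]
    push_cast
    field_simp
    linear_combination -hYeq
  -- the new conjugate equals yt
  have hfac : (X' - yt) * (((-(A*a^2 + B*a + C) : ℤ):ℝ)*(X' + yt) + ((-(2*A*a + B) : ℤ):ℝ)) = 0 := by
    linear_combination heq' - hyteq
  have hXyt : X' - yt ≠ 0 := sub_ne_zero.mpr (by linarith)
  have hsum : ((-(A*a^2 + B*a + C) : ℤ):ℝ)*(X' + yt) + ((-(2*A*a + B) : ℤ):ℝ) = 0 :=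
    (mul_eq_zero.mp hfac).resolve_left hXyt
  have hconj : (-(((-(2*A*a+B):ℤ)):ℝ)/(((-(A*a^2+B*a+C):ℤ)):ℝ) - X') = yt := by
    rw [sub_eq_iff_eq_add, div_eq_iff hA'Rne]
    linear_combination -hsum
  exact ⟨hA'int, heq', hconj, hytm1, hyt0⟩

/-- Uniqueness of the conjugate of a quadratic irrational. -/
lemma quad_unique {t : ℝ} (ht : Irrational t) {A B C A' B' C' : ℤ} (hA : A ≠ 0) (hA' : A' ≠ 0)
    (h : (A:ℝ)*t^2 + (B:ℝ)*t + (C:ℝ) = 0) (h' : (A':ℝ)*t^2 + (B':ℝ)*t + (C':ℝ) = 0) :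
    -(B:ℝ)/(A:ℝ) - t = -(B':ℝ)/(A':ℝ) - t := by
  have key : ((A'*B - A*B' : ℤ):ℝ) * t = ((A*C' - A'*C : ℤ):ℝ) := by
    push_cast
    linear_combination (A':ℝ) * h - (A:ℝ) * h'
  have hd : A'*B - A*B' = 0 := by
    by_contra hd
    apply ht
    refine ⟨((A*C' - A'*C : ℤ) : ℚ) / ((A'*B - A*B' : ℤ) : ℚ), ?_⟩
    have hdR : ((A'*B - A*B' : ℤ):ℝ) ≠ 0 := by exact_mod_cast hd
    push_cast at hdR key ⊢
    rw [div_eq_iff hdR]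
    linear_combination -key
  have hBB : (A':ℝ) * (B:ℝ) = (A:ℝ) * (B':ℝ) := by exact_mod_cast (by omega : A'*B = A*B')
  have hARne : (A:ℝ) ≠ 0 := by exact_mod_cast hA
  have hA'Rne : (A':ℝ) ≠ 0 := by exact_mod_cast hA'
  field_simp
  linear_combination -hBB

/-- Integer coefficient triples along the continued fraction orbit. -/
noncomputable def trip (x : ℝ) (t : ℤ × ℤ × ℤ) : ℕ → ℤ × ℤ × ℤ
  | 0 => t
  | n+1 =>
      (-((trip x t n).1 * ⌊xseq x n⌋^2 + (trip x t n).2.1 * ⌊xseq x n⌋ + (trip x t n).2.2),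
       -(2 * (trip x t n).1 * ⌊xseq x n⌋ + (trip x t n).2.1),
       -(trip x t n).1)

/-- The conjugate of the `n`-th complete quotient. -/
noncomputable def conjSeq (x : ℝ) (t : ℤ × ℤ × ℤ) (n : ℕ) : ℝ :=
  -(((trip x t n).2.1 : ℝ)) / (((trip x t n).1 : ℝ)) - xseq x n

/-- Reducedness invariant. -/
def IsRed (x : ℝ) (t : ℤ × ℤ × ℤ) (n : ℕ) : Prop :=
  0 < (trip x t n).1 ∧
  ((trip x t n).1 : ℝ) * (xseq x n)^2 + ((trip x t n).2.1 : ℝ) * xseq x n + ((trip x t n).2.2 : ℝ) = 0 ∧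
  1 < xseq x n ∧ -1 < conjSeq x t n ∧ conjSeq x t n < 0

lemma trip_step {x : ℝ} (hx : Irrational x) (t : ℤ × ℤ × ℤ) (n : ℕ) (h : IsRed x t n) :
    IsRed x t (n+1) ∧ conjSeq x t (n+1) = 1 / (conjSeq x t n - (⌊xseq x n⌋ : ℝ)) := by
  obtain ⟨hA, heq, hX1, hYm, hY0⟩ := h
  have ha1 : 1 ≤ ⌊xseq x n⌋ := Int.le_floor.mpr (by exact_mod_cast hX1.le)
  have hfr : 0 < Int.fract (xseq x n) := fract_pos_of_irrational (irrational_xseq hx n)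
  have hXa : 0 < xseq x n - (⌊xseq x n⌋ : ℝ) := hfr
  have hX' : xseq x (n+1) = 1 / (xseq x n - (⌊xseq x n⌋:ℝ)) := rfl
  have hX'1 : 1 < xseq x (n+1) := xseq_gt_one hx n
  have hstep := red_step (trip x t n).1 (trip x t n).2.1 (trip x t n).2.2 ⌊xseq x n⌋
    (xseq x n) (xseq x (n+1)) (conjSeq x t n) hA heq rfl hX1 hYm hY0 ha1 hXa hX' hX'1
  obtain ⟨h1, h2, h3, h4, h5⟩ := hstep
  have e1 : (trip x t (n+1)).1 = -((trip x t n).1 * ⌊xseq x n⌋^2 + (trip x t n).2.1 * ⌊xseq x n⌋ + (trip x t n).2.2) := rfl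
  have e2 : (trip x t (n+1)).2.1 = -(2 * (trip x t n).1 * ⌊xseq x n⌋ + (trip x t n).2.1) := rfl
  have e3 : (trip x t (n+1)).2.2 = -(trip x t n).1 := rfl
  have hconj : conjSeq x t (n+1) = 1 / (conjSeq x t n - (⌊xseq x n⌋:ℝ)) := by
    rw [conjSeq, e1, e2]
    exact h3
  refine ⟨⟨by rw [e1]; exact h1, by rw [e1, e2, e3]; exact h2, hX'1, by rw [hconj]; exact h4,
    by rw [hconj]; exact h5⟩, hconj⟩

lemma trip_inv {x : ℝ} (hx : Irrational x) (t : ℤ × ℤ × ℤ) (h0 : IsRed x t 0) (n : ℕ) :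
    IsRed x t n := by
  induction n with
  | zero => exact h0
  | succ n ih => exact (trip_step hx t n ih).1

lemma trip_disc {x : ℝ} (t : ℤ × ℤ × ℤ) (n : ℕ) :
    (trip x t n).2.1 ^ 2 - 4 * (trip x t n).1 * (trip x t n).2.2
      = t.2.1 ^ 2 - 4 * t.1 * t.2.2 := by
  induction n with
  | zero => rfl
  | succ n ih =>
      have e1 : (trip x t (n+1)).1 = -((trip x t n).1 * ⌊xseq x n⌋^2 + (trip x t n).2.1 * ⌊xseq x n⌋ + (trip x t n).2.2) := rfl
      have e2 : (trip x t (n+1)).2.1 = -(2 * (trip x t n).1 * ⌊xseq x n⌋ + (trip x t n).2.1) := rfl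
      have e3 : (trip x t (n+1)).2.2 = -(trip x t n).1 := rfl
      rw [e1, e2, e3, ← ih]
      ring

lemma trip_bounds {x : ℝ} {t : ℤ × ℤ × ℤ} {n : ℕ} (h : IsRed x t n) :
    (trip x t n).1 ≤ t.2.1 ^ 2 - 4 * t.1 * t.2.2 ∧
    -(t.2.1 ^ 2 - 4 * t.1 * t.2.2) ≤ (trip x t n).2.1 ∧
    (trip x t n).2.1 ≤ t.2.1 ^ 2 - 4 * t.1 * t.2.2 := by
  obtain ⟨hA, heq, hX1, hYm, hY0⟩ := h
  set A := (trip x t n).1 with hAd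
  set B := (trip x t n).2.1 with hBd
  set C := (trip x t n).2.2 with hCd
  set D := t.2.1 ^ 2 - 4 * t.1 * t.2.2 with hDd
  have hdisc : B ^ 2 - 4 * A * C = D := trip_disc t n
  set X := xseq x n with hXd
  set Y := conjSeq x t n with hYd
  have hYe : Y = -(B:ℝ)/(A:ℝ) - X := rfl
  have hAR : (0:ℝ) < (A:ℝ) := by exact_mod_cast hA
  have hARne : (A:ℝ) ≠ 0 := ne_of_gt hAR
  have hprod := vieta_prod (A:ℝ) (B:ℝ) (C:ℝ) X hARne heq
  have hsum := vieta_sum (A:ℝ) (B:ℝ) X hARne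
  rw [← hYe] at hprod hsum
  have hB : (B:ℝ) = -((A:ℝ)*(X+Y)) := by linarith
  have hC : (C:ℝ) = (A:ℝ)*(X*Y) := by linarith
  have hDR : (D:ℝ) = (A:ℝ)^2*(X-Y)^2 := by
    rw [← hdisc]
    push_cast
    rw [hB, hC]
    ring
  have hXY1 : 1 < X - Y := by linarith
  have hDA : (A:ℝ)^2 < (D:ℝ) := by
    rw [hDR]
    have hsq : (1:ℝ) < (X-Y)^2 := by nlinarith
    have hA2 : (0:ℝ) < (A:ℝ)^2 := by positivity
    nlinarith [mul_pos hA2 (show (0:ℝ) < (X-Y)^2 - 1 by linarith)]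
  have hDAi : A^2 < D := by exact_mod_cast hDA
  have hBD : (B:ℝ)^2 < (D:ℝ) := by
    rw [hDR, hB]
    have hXY : (X+Y)^2 < (X-Y)^2 := by nlinarith
    nlinarith [sq_nonneg (A:ℝ)]
  have hBDi : B^2 < D := by exact_mod_cast hBD
  have hD1 : 1 ≤ D := by nlinarith
  refine ⟨by nlinarith, by nlinarith, by nlinarith⟩

lemma exists_repeat {x : ℝ} (hx : Irrational x) (t : ℤ × ℤ × ℤ) (h0 : IsRed x t 0) :
    ∃ m m' : ℕ, m < m' ∧ xseq x m = xseq x m' := by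
  set D := t.2.1 ^ 2 - 4 * t.1 * t.2.2 with hDd
  set S := (Finset.Icc (-D) D) ×ˢ (Finset.Icc (-D) D) with hSd
  have hmem : ∀ n : ℕ, ((trip x t n).1, (trip x t n).2.1) ∈ S := by
    intro n
    have hinv := trip_inv hx t h0 n
    have hb := trip_bounds hinv
    have hA := hinv.1
    simp only [hSd, Finset.mem_product, Finset.mem_Icc]
    omega
  let g : ℕ → {p : ℤ × ℤ // p ∈ S} := fun n => ⟨((trip x t n).1, (trip x t n).2.1), hmem n⟩
  obtain ⟨m, m', hne, hg⟩ := Finite.exists_ne_map_eq_of_infinite g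
  have heqAB : (trip x t m).1 = (trip x t m').1 ∧ (trip x t m).2.1 = (trip x t m').2.1 := by
    simp only [g, Subtype.mk.injEq, Prod.mk.injEq] at hg
    exact hg
  -- show the complete quotients are equal
  have hxeq : xseq x m = xseq x m' := by
    have hm := trip_inv hx t h0 m
    have hm' := trip_inv hx t h0 m'
    obtain ⟨hA, heq, hX1, hYm, hY0⟩ := hm
    obtain ⟨hA', heq', hX1', hYm', hY0'⟩ := hm'
    have hCeq : (trip x t m).2.2 = (trip x t m').2.2 := by
      have d1 : (trip x t m).2.1^2 - 4*(trip x t m).1*(trip x t m).2.2 = D := trip_disc t m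
      have d2 : (trip x t m').2.1^2 - 4*(trip x t m').1*(trip x t m').2.2 = D := trip_disc t m'
      rw [heqAB.1, heqAB.2] at d1
      have h4 : 4*(trip x t m').1*(trip x t m).2.2 = 4*(trip x t m').1*(trip x t m').2.2 := by omega
      have hAne : (trip x t m').1 ≠ 0 := by omega
      have := mul_left_cancel₀ (a := 4*(trip x t m').1) (by positivity) h4
      exact this
    by_contra hne2
    -- then xseq x m' is the conjugate of xseq x m
    rw [heqAB.1, heqAB.2, hCeq] at heq
    have hsub : ((trip x t m').1:ℝ)*((xseq x m)^2 - (xseq x m')^2)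
        + ((trip x t m').2.1:ℝ)*(xseq x m - xseq x m') = 0 := by linear_combination heq - heq'
    have hfac : (xseq x m - xseq x m') *
        (((trip x t m').1:ℝ)*(xseq x m + xseq x m') + ((trip x t m').2.1:ℝ)) = 0 := by
      linear_combination hsub
    have hne3 : xseq x m - xseq x m' ≠ 0 := sub_ne_zero.mpr hne2
    have hsum2 := (mul_eq_zero.mp hfac).resolve_left hne3
    have hARne : ((trip x t m').1:ℝ) ≠ 0 := by exact_mod_cast (by omega : (trip x t m').1 ≠ 0)
    have hconjm : conjSeq x t m = -((trip x t m).2.1:ℝ)/((trip x t m).1:ℝ) - xseq x m := rfl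
    have hAc : ((trip x t m').1:ℝ) * conjSeq x t m
        = -((trip x t m').2.1:ℝ) - ((trip x t m').1:ℝ)*(xseq x m) := by
      rw [hconjm, heqAB.1, heqAB.2]
      field_simp
    have hAx : ((trip x t m').1:ℝ) * (xseq x m') = ((trip x t m').1:ℝ) * conjSeq x t m := by
      rw [hAc]; linarith [hsum2]
    have := mul_left_cancel₀ hARne hAx
    linarith
  rcases lt_or_gt_of_ne hne with h | h
  · exact ⟨m, m', h, hxeq⟩
  · exact ⟨m', m, h, hxeq.symm⟩

lemma back_step {x : ℝ} (hx : Irrational x) (t : ℤ × ℤ × ℤ) (h0 : IsRed x t 0) (n n' : ℕ)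
    (h : xseq x (n+1) = xseq x (n'+1)) : xseq x n = xseq x n' := by
  have hn := trip_inv hx t h0 n
  have hn' := trip_inv hx t h0 n'
  have hn1 := trip_inv hx t h0 (n+1)
  have hn1' := trip_inv hx t h0 (n'+1)
  have hrec := (trip_step hx t n hn).2
  have hrec' := (trip_step hx t n' hn').2
  -- the conjugates at n+1, n'+1 agree
  have hconjeq : conjSeq x t (n+1) = conjSeq x t (n'+1) := by
    have e1 := hn1.2.1
    have e2 := hn1'.2.1
    rw [← h] at e2
    have hA1 : (trip x t (n+1)).1 ≠ 0 := by have := hn1.1; omega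
    have hA2 : (trip x t (n'+1)).1 ≠ 0 := by have := hn1'.1; omega
    have := quad_unique (irrational_xseq hx (n+1)) hA1 hA2 e1 e2
    show -((trip x t (n+1)).2.1:ℝ)/((trip x t (n+1)).1:ℝ) - xseq x (n+1)
        = -((trip x t (n'+1)).2.1:ℝ)/((trip x t (n'+1)).1:ℝ) - xseq x (n'+1)
    rw [← h]
    exact this
  -- recover the partial quotients
  have hda : conjSeq x t n - (⌊xseq x n⌋:ℝ) ≠ 0 := by
    have := hn.2.2.2.2
    have ha1 : 1 ≤ ⌊xseq x n⌋ := Int.le_floor.mpr (by exact_mod_cast hn.2.2.1.le)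
    have : (1:ℝ) ≤ (⌊xseq x n⌋:ℝ) := by exact_mod_cast ha1
    have := hn.2.2.2.2
    intro hcon
    have : conjSeq x t n = (⌊xseq x n⌋:ℝ) := by linarith [sub_eq_zero.mp hcon]
    linarith
  have hda' : conjSeq x t n' - (⌊xseq x n'⌋:ℝ) ≠ 0 := by
    have ha1 : 1 ≤ ⌊xseq x n'⌋ := Int.le_floor.mpr (by exact_mod_cast hn'.2.2.1.le)
    have h2 : (1:ℝ) ≤ (⌊xseq x n'⌋:ℝ) := by exact_mod_cast ha1
    intro hcon
    have := sub_eq_zero.mp hcon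
    have := hn'.2.2.2.2
    linarith
  have hinv1 : conjSeq x t n = (⌊xseq x n⌋:ℝ) + 1/(conjSeq x t (n+1)) := by
    rw [hrec, one_div_one_div]; ring
  have hinv2 : conjSeq x t n' = (⌊xseq x n'⌋:ℝ) + 1/(conjSeq x t (n+1)) := by
    rw [hconjeq, hrec', one_div_one_div]; ring
  have hb1m := hn.2.2.2.1
  have hb10 := hn.2.2.2.2
  have hb2m := hn'.2.2.2.1
  have hb20 := hn'.2.2.2.2
  rw [hinv1] at hb1m hb10
  rw [hinv2] at hb2m hb20
  have haeq : ⌊xseq x n⌋ = ⌊xseq x n'⌋ := by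
    have h1 : (⌊xseq x n⌋:ℝ) - (⌊xseq x n'⌋:ℝ) < 1 := by linarith
    have h2 : (⌊xseq x n'⌋:ℝ) - (⌊xseq x n⌋:ℝ) < 1 := by linarith
    have h1' : ⌊xseq x n⌋ - ⌊xseq x n'⌋ < 1 := by exact_mod_cast (by push_cast; linarith : ((⌊xseq x n⌋ - ⌊xseq x n'⌋ : ℤ):ℝ) < 1)
    have h2' : ⌊xseq x n'⌋ - ⌊xseq x n⌋ < 1 := by exact_mod_cast (by push_cast; linarith : ((⌊xseq x n'⌋ - ⌊xseq x n⌋ : ℤ):ℝ) < 1)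
    omega
  rw [xseq_eq_floor_add hx n, xseq_eq_floor_add hx n', haeq, h]

lemma backward_dir {x : ℝ} (hx : Irrational x) (h1 : 1 < x) (A B C : ℤ) (hA : A ≠ 0)
    (heq : (A:ℝ) * x ^ 2 + (B:ℝ) * x + (C:ℝ) = 0)
    (hm : -1 < -(B:ℝ)/(A:ℝ) - x) (h0 : -(B:ℝ)/(A:ℝ) - x < 0) :
    ∃ k : ℕ, 1 ≤ k ∧ ∀ n : ℕ, cfA x (n + k) = cfA x n := by
  -- normalize the sign of A
  obtain ⟨t, ht⟩ : ∃ t : ℤ × ℤ × ℤ, IsRed x t 0 := by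
    rcases hA.lt_or_gt with hneg | hpos
    · refine ⟨(-A, -B, -C), ?_⟩
      have hx0 : xseq x 0 = x := rfl
      have hconj : conjSeq x (-A, -B, -C) 0 = -(B:ℝ)/(A:ℝ) - x := by
        show -((-B : ℤ):ℝ)/((-A : ℤ):ℝ) - xseq x 0 = _
        rw [hx0]
        push_cast
        rw [neg_neg, div_neg]
        ring
      refine ⟨by simp [trip]; omega, ?_, by rw [hx0]; exact h1, by rw [hconj]; exact hm,
        by rw [hconj]; exact h0⟩
      show ((-A : ℤ):ℝ) * (xseq x 0)^2 + ((-B : ℤ):ℝ) * xseq x 0 + ((-C : ℤ):ℝ) = 0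
      rw [hx0]; push_cast; linear_combination -heq
    · refine ⟨(A, B, C), hpos, ?_, h1, hm, h0⟩
      exact heq
  obtain ⟨m, m', hmm, hxe⟩ := exists_repeat hx t ht
  -- iterate backwards
  have hback : ∀ i : ℕ, i ≤ m → xseq x (m - i) = xseq x (m' - i) := by
    intro i
    induction i with
    | zero => intro _; simpa using hxe
    | succ i ih =>
        intro hi
        have hii : i ≤ m := by omega
        have e1 : m - (i+1) + 1 = m - i := by omega
        have e2 : m' - (i+1) + 1 = m' - i := by omega
        apply back_step hx t ht
        rw [e1, e2]
        exact ih hii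
  have hzero : xseq x 0 = xseq x (m' - m) := by
    have := hback m le_rfl
    simpa using this
  refine ⟨m' - m, by omega, ?_⟩
  set k := m' - m with hk
  have hshift : ∀ n : ℕ, xseq x (n + k) = xseq x n := by
    intro n
    induction n with
    | zero => simpa using hzero.symm
    | succ n ih =>
        have e : n + 1 + k = (n + k) + 1 := by omega
        rw [e]
        show 1 / Int.fract (xseq x (n + k)) = xseq x (n+1)
        rw [ih]
        rfl
  intro n
  rw [cfA_eq_floor_xseq hx, cfA_eq_floor_xseq hx, hshift n]


/-- Galois's theorem: an irrational real number `x` has a purely periodic regular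
continued fraction expansion iff `x` is a reduced quadratic irrational, i.e. `x > 1`
satisfies a quadratic `A x² + B x + C = 0` (`A, B, C ∈ ℤ`, `A ≠ 0`) whose other root
`x' = -B/A - x` lies in `(-1, 0)`. -/
theorem galois_purely_periodic_iff_reduced (x : ℝ) (hx : Irrational x) :
    (∃ k : ℕ, 1 ≤ k ∧ ∀ n : ℕ, cfA x (n + k) = cfA x n) ↔
      (1 < x ∧ ∃ A B C : ℤ, A ≠ 0 ∧ (A : ℝ) * x ^ 2 + (B : ℝ) * x + (C : ℝ) = 0 ∧
        -1 < -(B : ℝ) / (A : ℝ) - x ∧ -(B : ℝ) / (A : ℝ) - x < 0) := by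
  constructor
  · rintro ⟨k, hk1, hper⟩
    exact forward_dir hx k hk1 hper
  · rintro ⟨h1, A, B, C, hA, heq, hm, h0⟩
    exact backward_dir hx h1 A B C hA heq hm h0
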